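/- (Final FAPI error bound.) Let the sequence (π^t) be generated by federated API satisfying ‖V̄^t − V^{π^t}_I‖_∞ ≤ δ and ‖T^{π^{t+1}}_I V̄^t − T_I V̄^t‖_∞ ≤ ε̃ for all t. Then for every state s: limsup_{t→∞} |V̄^{π^t}(s) − max{V̄^{π*}(s), V̄^{π*_I}(s)}| ≤ (ε̃ + 2γδ)/(1−γ)² + 2γ R_max κ_1/(1−γ)², where π* is the optimal policy for the FRL objective, π*_I the optimal policy in the imaginary MDP, V̄^π = ∑_n q_n V^π_n, and κ_1 = ∑_n q_n κ_{n,I}. -/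

import Mathlib

open Finset Filter

variable {S A : Type*}

/-- A stochastic policy: for each state, a probability distribution over actions. -/
def IsPolicy [Fintype A] (pi : S → A → ℝ) : Prop :=
  (∀ s a, 0 ≤ pi s a) ∧ ∀ s, ∑ a, pi s a = 1

/-- A transition kernel: for each state-action pair, a probability distribution over states. -/
def IsKernel [Fintype S] (P : S → A → S → ℝ) : Prop :=
  (∀ s a s', 0 ≤ P s a s') ∧ ∀ s a, ∑ s', P s a s' = 1

/-- The policy Bellman operator `T^π` for kernel `P`. -/
def Tpol [Fintype S] [Fintype A] (γ : ℝ) (R : S → A → ℝ) (P : S → A → S → ℝ)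
    (pi : S → A → ℝ) (V : S → ℝ) (s : S) : ℝ :=
  ∑ a, pi s a * (R s a + γ * ∑ s', P s a s' * V s')

/-- The Bellman optimality operator `T` for kernel `P`. -/
noncomputable def Topt [Fintype S] [Fintype A] [Nonempty A] (γ : ℝ) (R : S → A → ℝ)
    (P : S → A → S → ℝ) (V : S → ℝ) (s : S) : ℝ :=
  Finset.univ.sup' Finset.univ_nonempty fun a => R s a + γ * ∑ s', P s a s' * V s'

/-- Heterogeneity measure `κ_{m,n}`: the supremum over policies `π` and states `s` of the
ℓ¹-distance between the induced state transition kernels `P_m^π(·|s)` and `P_n^π(·|s)`. -/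
noncomputable def kappa [Fintype S] [Fintype A] (Pm Pn : S → A → S → ℝ) : ℝ :=
  sSup {x : ℝ | ∃ pi : S → A → ℝ, ∃ s : S, IsPolicy pi ∧
    x = ∑ s', |(∑ a, pi s a * Pm s a s') - ∑ a, pi s a * Pn s a s'|}

/-- Sup-norm of a value function on a finite state space. -/
noncomputable def supNorm [Fintype S] [Nonempty S] (V : S → ℝ) : ℝ := ⨆ s, |V s|

variable [Fintype S] [Fintype A] [Nonempty S] [Nonempty A]

set_option linter.unusedSectionVars false
set_option linter.unusedVariables false

lemma abs_le_supNorm (V : S → ℝ) (s : S) : |V s| ≤ supNorm V := by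
  unfold supNorm
  exact le_ciSup (Set.Finite.bddAbove (Set.finite_range fun s => |V s|)) s

lemma supNorm_nonneg (V : S → ℝ) : 0 ≤ supNorm V :=
  (abs_nonneg _).trans (abs_le_supNorm V (Classical.arbitrary S))

lemma inner_sub_le {P : S → A → S → ℝ} (hP : IsKernel P) {V W : S → ℝ} {M : ℝ}
    (hM : ∀ s, V s - W s ≤ M) (s : S) (a : A) :
    (∑ s', P s a s' * V s') - ∑ s', P s a s' * W s' ≤ M := by
  rw [← Finset.sum_sub_distrib]
  calc ∑ s', (P s a s' * V s' - P s a s' * W s')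
      = ∑ s', P s a s' * (V s' - W s') := by
        exact Finset.sum_congr rfl fun s' _ => by ring
    _ ≤ ∑ s', P s a s' * M := Finset.sum_le_sum fun s' _ =>
        mul_le_mul_of_nonneg_left (hM s') (hP.1 s a s')
    _ = M := by rw [← Finset.sum_mul, hP.2 s a, one_mul]

lemma tpol_sub_le {γ : ℝ} (hγ : 0 ≤ γ) (R : S → A → ℝ) {P : S → A → S → ℝ}
    {pi : S → A → ℝ} (hpi : IsPolicy pi) (hP : IsKernel P) {V W : S → ℝ} {M : ℝ}
    (hM : ∀ s, V s - W s ≤ M) (s : S) :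
    Tpol γ R P pi V s - Tpol γ R P pi W s ≤ γ * M := by
  unfold Tpol
  rw [← Finset.sum_sub_distrib]
  have h : ∀ a ∈ Finset.univ (α := A),
      pi s a * (R s a + γ * ∑ s', P s a s' * V s') -
      pi s a * (R s a + γ * ∑ s', P s a s' * W s') ≤ pi s a * (γ * M) := by
    intro a _
    rw [← mul_sub]
    refine mul_le_mul_of_nonneg_left ?_ (hpi.1 s a)
    have h1 := inner_sub_le hP hM s a
    nlinarith
  calc _ ≤ ∑ a, pi s a * (γ * M) := Finset.sum_le_sum h
    _ = γ * M := by rw [← Finset.sum_mul, hpi.2 s, one_mul]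

lemma topt_sub_le {γ : ℝ} (hγ : 0 ≤ γ) (R : S → A → ℝ) {P : S → A → S → ℝ}
    (hP : IsKernel P) {V W : S → ℝ} {M : ℝ}
    (hM : ∀ s, V s - W s ≤ M) (s : S) :
    Topt γ R P V s - Topt γ R P W s ≤ γ * M := by
  unfold Topt
  rw [sub_le_iff_le_add]
  apply Finset.sup'_le
  intro a _
  have h1 := inner_sub_le hP hM s a
  have h2 : R s a + γ * ∑ s', P s a s' * W s' ≤
      Finset.univ.sup' Finset.univ_nonempty fun a => R s a + γ * ∑ s', P s a s' * W s' :=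
    Finset.le_sup' (fun a => R s a + γ * ∑ s', P s a s' * W s') (Finset.mem_univ a)
  nlinarith

lemma tpol_le_topt {γ : ℝ} (R : S → A → ℝ) (P : S → A → S → ℝ)
    {pi : S → A → ℝ} (hpi : IsPolicy pi) (V : S → ℝ) (s : S) :
    Tpol γ R P pi V s ≤ Topt γ R P V s := by
  unfold Tpol Topt
  calc ∑ a, pi s a * (R s a + γ * ∑ s', P s a s' * V s')
      ≤ ∑ a, pi s a * (Finset.univ.sup' Finset.univ_nonempty
          fun a => R s a + γ * ∑ s', P s a s' * V s') :=
        Finset.sum_le_sum fun a _ => mul_le_mul_of_nonneg_left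
          (Finset.le_sup' (fun a => R s a + γ * ∑ s', P s a s' * V s')
            (Finset.mem_univ a)) (hpi.1 s a)
    _ = _ := by rw [← Finset.sum_mul, hpi.2 s, one_mul]

lemma value_abs_bound {γ Rmax : ℝ} (hγ0 : 0 ≤ γ) (hγ1 : γ < 1) {R : S → A → ℝ}
    (hR : ∀ s a, 0 ≤ R s a ∧ R s a ≤ Rmax) {P : S → A → S → ℝ} (hP : IsKernel P)
    {pi : S → A → ℝ} (hpi : IsPolicy pi)
    {V : S → ℝ} (hV : ∀ s, V s = Tpol γ R P pi V s) (s : S) :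
    |V s| ≤ Rmax / (1 - γ) := by
  have h1γ : (0:ℝ) < 1 - γ := by linarith
  -- lower bound
  obtain ⟨s0, -, hs0⟩ := Finset.exists_mem_eq_inf' (Finset.univ_nonempty (α := S)) V
  set m := Finset.univ.inf' Finset.univ_nonempty V with hm
  have hmle : ∀ s', m ≤ V s' := fun s' => Finset.inf'_le _ (Finset.mem_univ s')
  have hmγ : γ * m ≤ m := by
    have : γ * m ≤ V s0 := by
      rw [hV s0]
      unfold Tpol
      calc γ * m = ∑ a, pi s0 a * (γ * m) := by rw [← Finset.sum_mul, hpi.2 s0, one_mul]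
        _ ≤ _ := by
          refine Finset.sum_le_sum fun a _ => mul_le_mul_of_nonneg_left ?_ (hpi.1 s0 a)
          have hin : m ≤ ∑ s', P s0 a s' * V s' := by
            calc m = ∑ s', P s0 a s' * m := by rw [← Finset.sum_mul, hP.2 s0 a, one_mul]
              _ ≤ _ := Finset.sum_le_sum fun s' _ =>
                  mul_le_mul_of_nonneg_left (hmle s') (hP.1 s0 a s')
          nlinarith [(hR s0 a).1]
    rw [hs0] at hm
    linarith [hm ▸ this]
  have hm0 : 0 ≤ m := by nlinarith
  -- upper bound
  obtain ⟨s1, -, hs1⟩ := Finset.exists_mem_eq_sup' (Finset.univ_nonempty (α := S)) V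
  set Mx := Finset.univ.sup' Finset.univ_nonempty V with hMx
  have hMxge : ∀ s', V s' ≤ Mx := fun s' => Finset.le_sup' _ (Finset.mem_univ s')
  have hMxγ : Mx ≤ Rmax + γ * Mx := by
    have : V s1 ≤ Rmax + γ * Mx := by
      rw [hV s1]
      unfold Tpol
      calc (∑ a, pi s1 a * (R s1 a + γ * ∑ s', P s1 a s' * V s'))
          ≤ ∑ a, pi s1 a * (Rmax + γ * Mx) := by
            refine Finset.sum_le_sum fun a _ => mul_le_mul_of_nonneg_left ?_ (hpi.1 s1 a)
            have hin : ∑ s', P s1 a s' * V s' ≤ Mx := by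
              calc ∑ s', P s1 a s' * V s' ≤ ∑ s', P s1 a s' * Mx :=
                  Finset.sum_le_sum fun s' _ =>
                    mul_le_mul_of_nonneg_left (hMxge s') (hP.1 s1 a s')
                _ = Mx := by rw [← Finset.sum_mul, hP.2 s1 a, one_mul]
            nlinarith [(hR s1 a).2]
        _ = Rmax + γ * Mx := by rw [← Finset.sum_mul, hpi.2 s1, one_mul]
    rw [hs1] at hMx
    linarith [hMx ▸ this]
  have hMxle : Mx ≤ Rmax / (1 - γ) := by
    rw [le_div_iff₀ h1γ]; nlinarith
  rw [abs_le]
  constructor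
  · have hRmax : 0 ≤ Rmax := by
      obtain ⟨a0⟩ := ‹Nonempty A›
      exact (hR s a0).1.trans (hR s a0).2
    have : 0 ≤ Rmax / (1 - γ) := div_nonneg hRmax h1γ.le
    linarith [hm0.trans (hmle s)]
  · exact (hMxge s).trans hMxle

lemma sum_abs_le_kappa {P P' : S → A → S → ℝ} (hP : IsKernel P) (hP' : IsKernel P')
    {pi : S → A → ℝ} (hpi : IsPolicy pi) (s : S) :
    ∑ s', |(∑ a, pi s a * P s a s') - ∑ a, pi s a * P' s a s'| ≤ kappa P P' := by
  have hmarg : ∀ (Q : S → A → S → ℝ), IsKernel Q → ∀ (pi' : S → A → ℝ), IsPolicy pi' →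
      ∀ s0 : S, ∑ s', ∑ a, pi' s0 a * Q s0 a s' = 1 := by
    intro Q hQ pi' hpi' s0
    rw [Finset.sum_comm]
    simp_rw [← Finset.mul_sum, hQ.2, mul_one]
    exact hpi'.2 s0
  apply le_csSup
  · refine ⟨2, ?_⟩
    rintro x ⟨pi', s0, hpi', rfl⟩
    calc ∑ s', |(∑ a, pi' s0 a * P s0 a s') - ∑ a, pi' s0 a * P' s0 a s'|
        ≤ ∑ s', ((∑ a, pi' s0 a * P s0 a s') + ∑ a, pi' s0 a * P' s0 a s') := by
          refine Finset.sum_le_sum fun s' _ => ?_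
          have h1 : 0 ≤ ∑ a, pi' s0 a * P s0 a s' :=
            Finset.sum_nonneg fun a _ => mul_nonneg (hpi'.1 s0 a) (hP.1 s0 a s')
          have h2 : 0 ≤ ∑ a, pi' s0 a * P' s0 a s' :=
            Finset.sum_nonneg fun a _ => mul_nonneg (hpi'.1 s0 a) (hP'.1 s0 a s')
          calc |(∑ a, pi' s0 a * P s0 a s') - ∑ a, pi' s0 a * P' s0 a s'|
              ≤ |∑ a, pi' s0 a * P s0 a s'| + |∑ a, pi' s0 a * P' s0 a s'| := abs_sub _ _
            _ = _ := by rw [abs_of_nonneg h1, abs_of_nonneg h2]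
      _ = 2 := by
          rw [Finset.sum_add_distrib, hmarg P hP pi' hpi' s0, hmarg P' hP' pi' hpi' s0]
          norm_num
  · exact ⟨pi, s, hpi, rfl⟩

lemma kappa_comm (P P' : S → A → S → ℝ) : kappa P P' = kappa P' P := by
  unfold kappa
  congr 1
  ext x
  constructor
  · rintro ⟨pi, s, hpi, rfl⟩
    exact ⟨pi, s, hpi, Finset.sum_congr rfl fun s' _ => (abs_sub_comm _ _)⟩
  · rintro ⟨pi, s, hpi, rfl⟩
    exact ⟨pi, s, hpi, Finset.sum_congr rfl fun s' _ => (abs_sub_comm _ _)⟩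

lemma kappa_self (P : S → A → S → ℝ) : kappa P P = 0 := by
  unfold kappa
  refine (congrArg sSup (?_ : _ = ({0} : Set ℝ))).trans (csSup_singleton 0)
  ext x
  simp only [Set.mem_setOf_eq, Set.mem_singleton_iff]
  constructor
  · rintro ⟨pi, s, hpi, rfl⟩
    simp
  · rintro rfl
    refine ⟨fun _ _ => (Fintype.card A : ℝ)⁻¹, Classical.arbitrary S,
      ⟨fun _ _ => by positivity, fun _ => ?_⟩, by simp⟩
    rw [Finset.sum_const, Finset.card_univ, nsmul_eq_mul]
    rw [mul_inv_cancel₀]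
    exact_mod_cast Fintype.card_ne_zero

lemma tpol_kernel_diff {γ : ℝ} (R : S → A → ℝ) (P P' : S → A → S → ℝ)
    (pi : S → A → ℝ) (U : S → ℝ) (s : S) :
    Tpol γ R P pi U s - Tpol γ R P' pi U s
      = γ * ∑ s', ((∑ a, pi s a * P s a s') - ∑ a, pi s a * P' s a s') * U s' := by
  unfold Tpol
  rw [← Finset.sum_sub_distrib]
  calc ∑ a, (pi s a * (R s a + γ * ∑ s', P s a s' * U s') -
        pi s a * (R s a + γ * ∑ s', P' s a s' * U s'))
      = ∑ a, ∑ s', γ * (pi s a * (P s a s' * U s') - pi s a * (P' s a s' * U s')) := by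
        refine Finset.sum_congr rfl fun a _ => ?_
        simp only [mul_add, Finset.mul_sum]
        rw [add_sub_add_left_eq_sub, ← Finset.sum_sub_distrib]
        exact Finset.sum_congr rfl fun s' _ => by ring
    _ = ∑ s', ∑ a, γ * (pi s a * (P s a s' * U s') - pi s a * (P' s a s' * U s')) :=
        Finset.sum_comm
    _ = _ := by
        rw [Finset.mul_sum]
        refine Finset.sum_congr rfl fun s' _ => ?_
        rw [← Finset.mul_sum]
        congr 1
        rw [sub_mul, Finset.sum_mul, Finset.sum_mul, ← Finset.sum_sub_distrib]
        exact Finset.sum_congr rfl fun a _ => by ring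

lemma kappa_bound {γ Rmax : ℝ} (hγ0 : 0 ≤ γ) (hγ1 : γ < 1) (hRmax : 0 ≤ Rmax)
    (R : S → A → ℝ) {P P' : S → A → S → ℝ} (hPk : IsKernel P) (hP'k : IsKernel P')
    {pi : S → A → ℝ} (hpi : IsPolicy pi) {W U : S → ℝ}
    (hW : ∀ s, W s ≤ Tpol γ R P pi W s) (hU : ∀ s, Tpol γ R P' pi U s ≤ U s)
    (hUbd : ∀ s, |U s| ≤ Rmax / (1 - γ)) (s : S) :
    W s - U s ≤ γ * Rmax * kappa P P' / (1 - γ) ^ 2 := by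
  have h1γ : (0:ℝ) < 1 - γ := by linarith
  have hC : 0 ≤ Rmax / (1 - γ) := div_nonneg hRmax h1γ.le
  set m := Finset.univ.sup' Finset.univ_nonempty (fun s => W s - U s) with hm
  have hmle : ∀ s', W s' - U s' ≤ m := fun s' =>
    Finset.le_sup' (fun s => W s - U s) (Finset.mem_univ s')
  have hptw : ∀ s0 : S, W s0 - U s0 ≤ γ * m + γ * (kappa P P' * (Rmax / (1 - γ))) := by
    intro s0
    have h1 : Tpol γ R P pi W s0 - Tpol γ R P pi U s0 ≤ γ * m :=
      tpol_sub_le hγ0 R hpi hPk hmle s0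
    have h2 : Tpol γ R P pi U s0 - Tpol γ R P' pi U s0
        ≤ γ * (kappa P P' * (Rmax / (1 - γ))) := by
      rw [tpol_kernel_diff]
      refine mul_le_mul_of_nonneg_left ?_ hγ0
      calc ∑ s', ((∑ a, pi s0 a * P s0 a s') - ∑ a, pi s0 a * P' s0 a s') * U s'
          ≤ ∑ s', |(∑ a, pi s0 a * P s0 a s') - ∑ a, pi s0 a * P' s0 a s'| * (Rmax / (1 - γ)) := by
            refine Finset.sum_le_sum fun s' _ => ?_
            calc ((∑ a, pi s0 a * P s0 a s') - ∑ a, pi s0 a * P' s0 a s') * U s'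
                ≤ |((∑ a, pi s0 a * P s0 a s') - ∑ a, pi s0 a * P' s0 a s') * U s'| :=
                  le_abs_self _
              _ = |(∑ a, pi s0 a * P s0 a s') - ∑ a, pi s0 a * P' s0 a s'| * |U s'| :=
                  abs_mul _ _
              _ ≤ _ := mul_le_mul_of_nonneg_left (hUbd s') (abs_nonneg _)
        _ = (∑ s', |(∑ a, pi s0 a * P s0 a s') - ∑ a, pi s0 a * P' s0 a s'|) * (Rmax / (1 - γ)) :=
            (Finset.sum_mul _ _ _).symm
        _ ≤ _ := mul_le_mul_of_nonneg_right (sum_abs_le_kappa hPk hP'k hpi s0) hC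
    calc W s0 - U s0 ≤ Tpol γ R P pi W s0 - Tpol γ R P' pi U s0 := by
          linarith [hW s0, hU s0]
      _ = (Tpol γ R P pi W s0 - Tpol γ R P pi U s0) +
          (Tpol γ R P pi U s0 - Tpol γ R P' pi U s0) := by ring
      _ ≤ _ := by linarith
  obtain ⟨s1, -, hs1⟩ := Finset.exists_mem_eq_sup' (Finset.univ_nonempty (α := S))
    (fun s => W s - U s)
  have hmrec : m ≤ γ * m + γ * (kappa P P' * (Rmax / (1 - γ))) := by
    have : m = W s1 - U s1 := by rw [hm, hs1]
    rw [this]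
    exact this ▸ hptw s1
  have hmfin : m ≤ γ * (kappa P P' * (Rmax / (1 - γ))) / (1 - γ) := by
    rw [le_div_iff₀ h1γ]; nlinarith
  have heq : γ * (kappa P P' * (Rmax / (1 - γ))) / (1 - γ)
      = γ * Rmax * kappa P P' / (1 - γ) ^ 2 := by
    field_simp
  exact (hmle s).trans (hmfin.trans_eq heq)

theorem stmt19 (N : ℕ) (γ Rmax δ εt : ℝ) (hγ0 : 0 < γ) (hγ1 : γ < 1)
    (R : S → A → ℝ) (hR : ∀ s a, 0 ≤ R s a ∧ R s a ≤ Rmax)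
    (q : Fin N → ℝ) (hq0 : ∀ n, 0 ≤ q n) (hq1 : ∑ n, q n = 1)
    (P : Fin N → S → A → S → ℝ) (hP : ∀ n, IsKernel (P n))
    (Pbar : S → A → S → ℝ) (hPbar : ∀ s a s', Pbar s a s' = ∑ j, q j * P j s a s')
    (μ : S → ℝ) (hμ0 : ∀ s, 0 ≤ μ s) (hμ1 : ∑ s, μ s = 1)
    -- the sequence of global policies and their value functions
    (pit : ℕ → S → A → ℝ) (hpit : ∀ t, IsPolicy (pit t))
    (Vn : ℕ → Fin N → S → ℝ)
    (hVn : ∀ t n s, Vn t n s = Tpol γ R (P n) (pit t) (Vn t n) s)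
    (VI : ℕ → S → ℝ) (hVI : ∀ t s, VI t s = Tpol γ R Pbar (pit t) (VI t) s)
    (Vbar : ℕ → S → ℝ)
    (hδ : ∀ t, supNorm (fun s => Vbar t s - VI t s) ≤ δ)
    (hε : ∀ t, supNorm
      (fun s => Tpol γ R Pbar (pit (t + 1)) (Vbar t) s - Topt γ R Pbar (Vbar t) s) ≤ εt)
    -- π*, the optimal policy for the FRL objective
    (pistar : S → A → ℝ) (hpistar : IsPolicy pistar)
    (Vstarn : Fin N → S → ℝ)
    (hVstarn : ∀ n s, Vstarn n s = Tpol γ R (P n) pistar (Vstarn n) s)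
    (hopt : ∀ pi' : S → A → ℝ, IsPolicy pi' → ∀ W : Fin N → S → ℝ,
      (∀ n s, W n s = Tpol γ R (P n) pi' (W n) s) →
      ∑ s, μ s * ∑ n, q n * W n s ≤ ∑ s, μ s * ∑ n, q n * Vstarn n s)
    -- π*_I, the optimal policy of the imaginary MDP
    (pistarI : S → A → ℝ) (hpistarI : IsPolicy pistarI)
    (VIstar : S → ℝ) (hVIstar : ∀ s, VIstar s = Tpol γ R Pbar pistarI VIstar s)
    (hVIstarOpt : ∀ s, VIstar s = Topt γ R Pbar VIstar s)
    (VstarIn : Fin N → S → ℝ)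
    (hVstarIn : ∀ n s, VstarIn n s = Tpol γ R (P n) pistarI (VstarIn n) s) :
    ∀ s, limsup (fun t => |(∑ n, q n * Vn t n s) -
        max (∑ n, q n * Vstarn n s) (∑ n, q n * VstarIn n s)|) atTop ≤
      (εt + 2 * γ * δ) / (1 - γ) ^ 2 +
        2 * γ * Rmax * (∑ n, q n * kappa (P n) Pbar) / (1 - γ) ^ 2 := by
  
  intro s
  have hγle : (0:ℝ) ≤ γ := hγ0.le
  have h1γ : (0:ℝ) < 1 - γ := by linarith
  obtain ⟨a0⟩ := ‹Nonempty A›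
  obtain ⟨sa⟩ := ‹Nonempty S›
  have hRmax : 0 ≤ Rmax := (hR sa a0).1.trans (hR sa a0).2
  -- Pbar is a kernel
  have hPbarK : IsKernel Pbar := by
    constructor
    · intro s a s'
      rw [hPbar]
      exact Finset.sum_nonneg fun j _ => mul_nonneg (hq0 j) ((hP j).1 s a s')
    · intro s a
      simp_rw [hPbar]
      rw [Finset.sum_comm]
      simp_rw [← Finset.mul_sum, (hP _).2, mul_one]
      exact hq1
  -- value function bounds
  have hVIbd : ∀ t s, |VI t s| ≤ Rmax / (1 - γ) := fun t =>
    value_abs_bound hγle hγ1 hR hPbarK (hpit t) (hVI t)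
  have hVnbd : ∀ t n s, |Vn t n s| ≤ Rmax / (1 - γ) := fun t n =>
    value_abs_bound hγle hγ1 hR (hP n) (hpit t) (hVn t n)
  have hVIstarbd : ∀ s, |VIstar s| ≤ Rmax / (1 - γ) :=
    value_abs_bound hγle hγ1 hR hPbarK hpistarI hVIstar
  have hVstarInbd : ∀ n s, |VstarIn n s| ≤ Rmax / (1 - γ) := fun n =>
    value_abs_bound hγle hγ1 hR (hP n) hpistarI (hVstarIn n)
  -- δ, εt nonneg
  have hδ0 : 0 ≤ δ := (supNorm_nonneg _).trans (hδ 0)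
  have hε0 : 0 ≤ εt := (supNorm_nonneg _).trans (hε 0)
  -- per-client heterogeneity bounds
  set Bn : Fin N → ℝ := fun n => γ * Rmax * kappa (P n) Pbar / (1 - γ) ^ 2 with hBn
  set B : ℝ := γ * Rmax * (∑ n, q n * kappa (P n) Pbar) / (1 - γ) ^ 2 with hBdef
  have hBsum : ∑ n, q n * Bn n = B := by
    rw [hBdef, Finset.mul_sum, Finset.sum_div]
    exact Finset.sum_congr rfl fun n _ => by rw [hBn]; ring
  have hBn0 : ∀ n, 0 ≤ Bn n := by
    intro n
    have h0 : (0:ℝ) ≤ γ * Rmax * 0 / (1 - γ) ^ 2 := by norm_num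
    have hVV : ∀ s0, VstarIn n s0 - VstarIn n s0 ≤ γ * Rmax * kappa (P n) (P n) / (1 - γ) ^ 2 :=
      kappa_bound hγle hγ1 hRmax R (hP n) (hP n) hpistarI
        (fun s0 => (hVstarIn n s0).le) (fun s0 => (hVstarIn n s0).ge) (hVstarInbd n)
    have := hVV sa
    rw [kappa_self] at this
    have hk : 0 ≤ kappa (P n) Pbar := by
      have h2 := sum_abs_le_kappa (hP n) hPbarK hpistarI sa
      exact le_trans (Finset.sum_nonneg fun s' _ => abs_nonneg _) h2
    rw [hBn]
    positivity
  have hB0 : 0 ≤ B := by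
    rw [← hBsum]
    exact Finset.sum_nonneg fun n _ => mul_nonneg (hq0 n) (hBn0 n)
  -- weighted aggregation lemma
  have hwt : ∀ (f : Fin N → S → ℝ) (g : S → ℝ), (∀ n s0, |f n s0 - g s0| ≤ Bn n) →
      ∀ s0, |(∑ n, q n * f n s0) - g s0| ≤ B := by
    intro f g h s0
    have hsplit : (∑ n, q n * f n s0) - g s0 = ∑ n, q n * (f n s0 - g s0) := by
      simp_rw [mul_sub]
      rw [Finset.sum_sub_distrib, ← Finset.sum_mul, hq1, one_mul]
    rw [hsplit]
    calc |∑ n, q n * (f n s0 - g s0)| ≤ ∑ n, |q n * (f n s0 - g s0)| :=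
        Finset.abs_sum_le_sum_abs _ _
      _ ≤ ∑ n, q n * Bn n := Finset.sum_le_sum fun n _ => by
          rw [abs_mul, abs_of_nonneg (hq0 n)]
          exact mul_le_mul_of_nonneg_left (h n s0) (hq0 n)
      _ = B := hBsum
  -- |Vn t n - VI t| ≤ Bn n
  have hVnVIn : ∀ t n s0, |Vn t n s0 - VI t s0| ≤ Bn n := by
    intro t n s0
    rw [abs_sub_le_iff]
    constructor
    · exact kappa_bound hγle hγ1 hRmax R (hP n) hPbarK (hpit t)
        (fun u => (hVn t n u).le) (fun u => (hVI t u).ge) (hVIbd t) s0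
    · have := kappa_bound hγle hγ1 hRmax R hPbarK (hP n) (hpit t)
        (fun u => (hVI t u).le) (fun u => (hVn t n u).ge) (hVnbd t n) s0
      rwa [kappa_comm (Pbar) (P n)] at this
  have hA : ∀ t s0, |(∑ n, q n * Vn t n s0) - VI t s0| ≤ B := fun t =>
    hwt (Vn t) (VI t) (hVnVIn t)
  -- |VstarIn n - VIstar| ≤ Bn n
  have hVstarInVIn : ∀ n s0, |VstarIn n s0 - VIstar s0| ≤ Bn n := by
    intro n s0
    rw [abs_sub_le_iff]
    constructor
    · exact kappa_bound hγle hγ1 hRmax R (hP n) hPbarK hpistarI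
        (fun u => (hVstarIn n u).le) (fun u => (hVIstar u).ge) hVIstarbd s0
    · have := kappa_bound hγle hγ1 hRmax R hPbarK (hP n) hpistarI
        (fun u => (hVIstar u).le) (fun u => (hVstarIn n u).ge) (hVstarInbd n) s0
      rwa [kappa_comm (Pbar) (P n)] at this
  have hB2 : ∀ s0, |(∑ n, q n * VstarIn n s0) - VIstar s0| ≤ B := fun s0 =>
    hwt VstarIn VIstar hVstarInVIn s0
  -- ∑ q Vstarn ≤ VIstar + B  (one-sided)
  have hVstarnLe : ∀ s0, (∑ n, q n * Vstarn n s0) ≤ VIstar s0 + B := by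
    intro s0
    have hper : ∀ n s1, Vstarn n s1 - VIstar s1 ≤ Bn n := by
      intro n
      exact kappa_bound hγle hγ1 hRmax R (hP n) hPbarK hpistar
        (fun u => (hVstarn n u).le)
        (fun u => le_of_le_of_eq (tpol_le_topt R Pbar hpistar VIstar u) (hVIstarOpt u).symm)
        hVIstarbd
    have hsplit : (∑ n, q n * Vstarn n s0) - VIstar s0 = ∑ n, q n * (Vstarn n s0 - VIstar s0) := by
      simp_rw [mul_sub]
      rw [Finset.sum_sub_distrib, ← Finset.sum_mul, hq1, one_mul]
    have : (∑ n, q n * Vstarn n s0) - VIstar s0 ≤ B := by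
      rw [hsplit, ← hBsum]
      exact Finset.sum_le_sum fun n _ => mul_le_mul_of_nonneg_left (hper n s0) (hq0 n)
    linarith
  -- VI t ≤ VIstar
  have hVIle : ∀ t s0, VI t s0 ≤ VIstar s0 := by
    intro t s0
    have := kappa_bound hγle hγ1 hRmax R hPbarK hPbarK (hpit t)
      (fun u => (hVI t u).le)
      (fun u => le_of_le_of_eq (tpol_le_topt R Pbar (hpit t) VIstar u) (hVIstarOpt u).symm)
      hVIstarbd s0
    rw [kappa_self] at this
    have h0 : γ * Rmax * 0 / (1 - γ) ^ 2 = 0 := by ring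
    rw [h0] at this
    linarith
  -- the error sequence
  set e : ℕ → ℝ := fun t => Finset.univ.sup' Finset.univ_nonempty (fun s0 => VIstar s0 - VI t s0)
    with he
  have he_ge : ∀ t s0, VIstar s0 - VI t s0 ≤ e t := fun t s0 =>
    Finset.le_sup' (fun s0 => VIstar s0 - VI t s0) (Finset.mem_univ s0)
  have he0 : ∀ t, 0 ≤ e t := fun t => le_trans (by linarith [hVIle t sa]) (he_ge t sa)
  set ε' : ℝ := εt + 2 * γ * δ with hε'
  have hε'0 : 0 ≤ ε' := by rw [hε']; nlinarith
  set c : ℝ := ε' / (1 - γ) with hc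
  have hc0 : 0 ≤ c := div_nonneg hε'0 h1γ.le
  -- greedy step error
  have hTT : ∀ t s0, Topt γ R Pbar (VI t) s0 ≤ Tpol γ R Pbar (pit (t + 1)) (VI t) s0 + ε' := by
    intro t s0
    have hd1 : ∀ u, VI t u - Vbar t u ≤ δ := by
      intro u
      have := (abs_le.1 ((abs_le_supNorm (fun u => Vbar t u - VI t u) u).trans (hδ t))).1
      linarith
    have hd2 : ∀ u, Vbar t u - VI t u ≤ δ := by
      intro u
      have := (abs_le.1 ((abs_le_supNorm (fun u => Vbar t u - VI t u) u).trans (hδ t))).2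
      simpa using this
    have h1 : Topt γ R Pbar (VI t) s0 - Topt γ R Pbar (Vbar t) s0 ≤ γ * δ :=
      topt_sub_le hγle R hPbarK hd1 s0
    have h2 : Topt γ R Pbar (Vbar t) s0 ≤ Tpol γ R Pbar (pit (t + 1)) (Vbar t) s0 + εt := by
      have := (abs_le.1 ((abs_le_supNorm
        (fun u => Tpol γ R Pbar (pit (t + 1)) (Vbar t) u - Topt γ R Pbar (Vbar t) u) s0).trans
          (hε t))).1
      linarith
    have h3 : Tpol γ R Pbar (pit (t + 1)) (Vbar t) s0 -
        Tpol γ R Pbar (pit (t + 1)) (VI t) s0 ≤ γ * δ :=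
      tpol_sub_le hγle R (hpit (t + 1)) hPbarK hd2 s0
    rw [hε']
    linarith
  -- one-step decrease bound
  have hstep2 : ∀ t s0, VI t s0 - VI (t + 1) s0 ≤ c := by
    intro t s0
    set d : ℝ := Finset.univ.sup' Finset.univ_nonempty (fun u => VI t u - VI (t + 1) u) with hd
    have hdge : ∀ u, VI t u - VI (t + 1) u ≤ d := fun u =>
      Finset.le_sup' (fun u => VI t u - VI (t + 1) u) (Finset.mem_univ u)
    have hptw : ∀ u, VI t u - VI (t + 1) u ≤ ε' + γ * d := by
      intro u
      have h1 : VI t u ≤ Topt γ R Pbar (VI t) u := by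
        rw [hVI t u]
        exact tpol_le_topt R Pbar (hpit t) (VI t) u
      have h2 := hTT t u
      have h3 : Tpol γ R Pbar (pit (t + 1)) (VI t) u -
          Tpol γ R Pbar (pit (t + 1)) (VI (t + 1)) u ≤ γ * d :=
        tpol_sub_le hγle R (hpit (t + 1)) hPbarK hdge u
      have h4 : VI (t + 1) u = Tpol γ R Pbar (pit (t + 1)) (VI (t + 1)) u := hVI (t + 1) u
      linarith
    obtain ⟨u1, -, hu1⟩ := Finset.exists_mem_eq_sup' (Finset.univ_nonempty (α := S))
      (fun u => VI t u - VI (t + 1) u)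
    have hdrec : d ≤ ε' + γ * d := by
      have h5 : d = VI t u1 - VI (t + 1) u1 := by rw [hd, hu1]
      rw [h5]
      exact h5 ▸ hptw u1
    have : d ≤ c := by rw [hc, le_div_iff₀ h1γ]; nlinarith
    exact (hdge s0).trans this
  -- the recursion e (t+1) ≤ γ e t + c
  have hε'c : ε' + γ * c = c := by rw [hc]; field_simp; ring
  have hrec : ∀ t, e (t + 1) ≤ γ * e t + c := by
    intro t
    have hptw : ∀ u, VIstar u - VI (t + 1) u ≤ γ * e t + c := by
      intro u
      have h1 : Tpol γ R Pbar pistarI VIstar u - Tpol γ R Pbar pistarI (VI t) u ≤ γ * e t :=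
        tpol_sub_le hγle R hpistarI hPbarK (he_ge t) u
      have h2 : Tpol γ R Pbar pistarI (VI t) u ≤ Topt γ R Pbar (VI t) u :=
        tpol_le_topt R Pbar hpistarI (VI t) u
      have h3 := hTT t u
      have h4 : Tpol γ R Pbar (pit (t + 1)) (VI t) u -
          Tpol γ R Pbar (pit (t + 1)) (VI (t + 1)) u ≤ γ * c :=
        tpol_sub_le hγle R (hpit (t + 1)) hPbarK (hstep2 t) u
      have h5 : VIstar u = Tpol γ R Pbar pistarI VIstar u := hVIstar u
      have h6 : VI (t + 1) u = Tpol γ R Pbar (pit (t + 1)) (VI (t + 1)) u := hVI (t + 1) u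
      have := hε'c
      linarith
    rw [he]
    exact Finset.sup'_le _ _ fun u _ => hptw u
  -- geometric decay
  have hind : ∀ t, e t ≤ γ ^ t * e 0 + c / (1 - γ) := by
    intro t
    induction t with
    | zero =>
      rw [pow_zero, one_mul]
      have : 0 ≤ c / (1 - γ) := div_nonneg hc0 h1γ.le
      linarith
    | succ t ih =>
      have h1 := hrec t
      have h2 : γ * e t ≤ γ * (γ ^ t * e 0 + c / (1 - γ)) :=
        mul_le_mul_of_nonneg_left ih hγle
      have h3 : γ * (γ ^ t * e 0 + c / (1 - γ)) + c = γ ^ (t + 1) * e 0 + c / (1 - γ) := by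
        rw [pow_succ]
        field_simp
        ring
      linarith
  -- final pointwise bound
  have hfin : ∀ t, |(∑ n, q n * Vn t n s) -
      max (∑ n, q n * Vstarn n s) (∑ n, q n * VstarIn n s)|
        ≤ γ ^ t * e 0 + (c / (1 - γ) + 2 * B) := by
    intro t
    have h1 := abs_le.1 (hA t s)
    have h2 := abs_le.1 (hB2 s)
    have h3 := hVstarnLe s
    have h4 := hVIle t s
    have h5 := he_ge t s
    have h6 := hind t
    have h7 : 0 ≤ γ ^ t * e 0 := mul_nonneg (pow_nonneg hγle t) (he0 0)
    have h8 : 0 ≤ c / (1 - γ) := div_nonneg hc0 h1γ.le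
    rw [abs_le]
    constructor
    · have hmax_le : max (∑ n, q n * Vstarn n s) (∑ n, q n * VstarIn n s) ≤ VIstar s + B :=
        max_le h3 (by linarith [h2.2])
      have het := he0 t
      linarith [h1.1]
    · have hmax_ge : VIstar s - B ≤ max (∑ n, q n * Vstarn n s) (∑ n, q n * VstarIn n s) :=
        le_trans (by linarith [h2.1]) (le_max_right _ _)
      linarith [h1.2]
  -- limsup computation
  have hCeq : c / (1 - γ) + 2 * B = (εt + 2 * γ * δ) / (1 - γ) ^ 2 +
      2 * γ * Rmax * (∑ n, q n * kappa (P n) Pbar) / (1 - γ) ^ 2 := by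
    rw [hc, hε', hBdef, div_div, ← sq]
    ring
  have hb_tendsto : Tendsto (fun t => γ ^ t * e 0 + (c / (1 - γ) + 2 * B)) atTop
      (nhds (0 * e 0 + (c / (1 - γ) + 2 * B))) :=
    ((tendsto_pow_atTop_nhds_zero_of_lt_one hγle hγ1).mul_const _).add_const _
  rw [zero_mul, zero_add] at hb_tendsto
  calc limsup (fun t => |(∑ n, q n * Vn t n s) -
        max (∑ n, q n * Vstarn n s) (∑ n, q n * VstarIn n s)|) atTop
      ≤ limsup (fun t => γ ^ t * e 0 + (c / (1 - γ) + 2 * B)) atTop := by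
        refine limsup_le_limsup (Eventually.of_forall hfin) ?_ ?_
        · exact Filter.isCoboundedUnder_le_of_le atTop fun t => abs_nonneg _
        · exact hb_tendsto.isBoundedUnder_le
    _ = c / (1 - γ) + 2 * B := hb_tendsto.limsup_eq
    _ = _ := hCeq
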